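/- On a probability space, in the multilayer e-filter setting with null structure, fix c > 0, levels γ^(1),…,γ^(M) ∈ (0,1) and α^(1),…,α^(M) ∈ (0,1), an integer R ≥ 1, and a constant c_kn > 0. For each m ∈ [M] and r ∈ [R], let (T_{g,r}^(m))_{g∈[G^(m)]} be real random statistics and t̃_r^(m) > 0 a random threshold, and assume the knockoff supremum bound E[sup_{t>0} #{g ∈ H0^(m) : T_{g,r}^(m) ≥ t} / (1 + #{g ∈ H0^(m) : T_{g,r}^(m) ≤ −t})] ≤ c_kn. Define V̂_r^(m) = c·(1 + #{g ∈ [G^(m)] : T_{g,r}^(m) ≤ −t̃_r^(m)}) and the generalized e-values e_{g,r}^(m) = G^(m)·1{T_{g,r}^(m) ≥ t̃_r^(m)}/max(V̂_r^(m), γ^(m)). For fixed weights w_r^(m) ≥ 0 with Σ_{r=1}^R w_r^(m) = 1, let ē_g^(m) = Σ_{r=1}^R w_r^(m) e_{g,r}^(m), and let S be the output of the generalized e-filter applied to (ē_g^(m)) at levels α^(1),…,α^(M). Then FDR^(m) ≤ (c_kn/c)·α^(m) for every m ∈ [M]. -/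

import Mathlib

open scoped ENNReal
open Filter MeasureTheory

namespace MultilayerEFilter

variable {N M : ℕ} {G : Fin M → ℕ}

/-- Candidate selection set `S(t) = {j : e_{h(m,j)}^(m) ≥ t^(m) for all m}`. -/
noncomputable def sel (h : (m : Fin M) → Fin N → Fin (G m))
    (e : (m : Fin M) → Fin (G m) → ℝ≥0∞) (t : Fin M → ℝ≥0∞) : Finset (Fin N) :=
  Finset.univ.filter fun j => ∀ m, t m ≤ e m (h m j)

/-- Induced group selection `S^(m) = {g : A_g^(m) ∩ S ≠ ∅}`. -/
noncomputable def selGrp (A : (m : Fin M) → Fin (G m) → Finset (Fin N))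
    (S : Finset (Fin N)) (m : Fin M) : Finset (Fin (G m)) :=
  Finset.univ.filter fun g => ∃ j ∈ A m g, j ∈ S

/-- Estimated FDP at layer `m`: `(G^(m)/t^(m)) / (|S^(m)(t)| ∨ 1)` (with `G/∞ = 0`). -/
noncomputable def FDPhat (A : (m : Fin M) → Fin (G m) → Finset (Fin N))
    (h : (m : Fin M) → Fin N → Fin (G m))
    (e : (m : Fin M) → Fin (G m) → ℝ≥0∞) (t : Fin M → ℝ≥0∞) (m : Fin M) : ℝ≥0∞ :=
  ((G m : ℝ≥0∞) / t m) / ((max (selGrp A (sel h e t) m).card 1 : ℕ) : ℝ≥0∞)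

/-- Admissible threshold vectors. -/
noncomputable def admissible (A : (m : Fin M) → Fin (G m) → Finset (Fin N))
    (h : (m : Fin M) → Fin N → Fin (G m))
    (e : (m : Fin M) → Fin (G m) → ℝ≥0∞) (α : Fin M → ℝ) : Set (Fin M → ℝ≥0∞) :=
  {t | (∀ m, 1 ≤ t m) ∧ ∀ m, FDPhat A h e t m ≤ ENNReal.ofReal (α m)}

/-- Threshold of the generalized e-filter: coordinatewise minimum over admissible vectors. -/
noncomputable def filterThreshold (A : (m : Fin M) → Fin (G m) → Finset (Fin N))
    (h : (m : Fin M) → Fin N → Fin (G m))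
    (e : (m : Fin M) → Fin (G m) → ℝ≥0∞) (α : Fin M → ℝ) (m : Fin M) : ℝ≥0∞ :=
  sInf {s | ∃ t ∈ admissible A h e α, t m = s}

/-- Output of the generalized e-filter. -/
noncomputable def output (A : (m : Fin M) → Fin (G m) → Finset (Fin N))
    (h : (m : Fin M) → Fin N → Fin (G m))
    (e : (m : Fin M) → Fin (G m) → ℝ≥0∞) (α : Fin M → ℝ) : Finset (Fin N) :=
  sel h e (filterThreshold A h e α)

/-- Null groups at layer `m`: groups entirely contained in the null feature set. -/
def nullGrp (A : (m : Fin M) → Fin (G m) → Finset (Fin N))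
    (H0 : Finset (Fin N)) (m : Fin M) : Finset (Fin (G m)) :=
  Finset.univ.filter fun g => A m g ⊆ H0

/-- Layer-`m` false discovery proportion of a selected feature set. -/
noncomputable def FDP (A : (m : Fin M) → Fin (G m) → Finset (Fin N))
    (H0 : Finset (Fin N)) (S : Finset (Fin N)) (m : Fin M) : ℝ≥0∞ :=
  ((selGrp A S m ∩ nullGrp A H0 m).card : ℝ≥0∞) /
    ((max (selGrp A S m).card 1 : ℕ) : ℝ≥0∞)

end MultilayerEFilter

namespace MultilayerEFilter

/-- Rational threshold with at least as favorable counts. -/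
lemma exists_rat_thresh {ι : Type*} (F : Finset ι) (T : ι → ℝ) {t : ℝ} (ht : 0 < t) :
    ∃ q : ℚ, 0 < q ∧
      (F.filter fun g => t ≤ T g).card ≤ (F.filter fun g => (q : ℝ) ≤ T g).card ∧
      (F.filter fun g => T g ≤ -(q : ℝ)).card ≤ (F.filter fun g => T g ≤ -t).card := by
  classical
  set B : Finset ℝ := (insert (0 : ℝ) (F.image fun g => -T g)).filter (fun x => x < t) with hB
  have h0B : (0 : ℝ) ∈ B := by simp [hB, ht]
  have hBne : B.Nonempty := ⟨0, h0B⟩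
  set t' := B.max' hBne with ht'
  have ht'lt : t' < t := (Finset.mem_filter.mp (B.max'_mem hBne)).2
  obtain ⟨q, hq1, hq2⟩ := exists_rat_btwn ht'lt
  have ht'0 : (0 : ℝ) ≤ t' := Finset.le_max' B 0 h0B
  have hq0 : 0 < q := by exact_mod_cast ht'0.trans_lt hq1
  refine ⟨q, hq0, ?_, ?_⟩
  · apply Finset.card_le_card
    intro g hg
    rw [Finset.mem_filter] at hg ⊢
    exact ⟨hg.1, le_trans (le_of_lt hq2) hg.2⟩
  · apply Finset.card_le_card
    intro g hg
    rw [Finset.mem_filter] at hg ⊢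
    refine ⟨hg.1, ?_⟩
    by_contra hcon
    push_neg at hcon
    have hmemB : -T g ∈ B := by
      rw [hB, Finset.mem_filter]
      refine ⟨Finset.mem_insert_of_mem (Finset.mem_image_of_mem _ hg.1), by linarith⟩
    have : -T g ≤ t' := Finset.le_max' B _ hmemB
    have : (q : ℝ) ≤ -T g := by linarith [hg.2]
    linarith
    
variable {N M : ℕ} {G : Fin M → ℕ}

lemma sel_anti (h : (m : Fin M) → Fin N → Fin (G m))
    (e : (m : Fin M) → Fin (G m) → ℝ≥0∞) {t t' : Fin M → ℝ≥0∞}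
    (htt : ∀ m, t m ≤ t' m) : sel h e t' ⊆ sel h e t := by
  intro j hj
  simp only [sel, Finset.mem_filter, Finset.mem_univ, true_and] at hj ⊢
  exact fun m => (htt m).trans (hj m)

lemma selGrp_mono (A : (m : Fin M) → Fin (G m) → Finset (Fin N))
    {S S' : Finset (Fin N)} (hS : S ⊆ S') (m : Fin M) :
    selGrp A S m ⊆ selGrp A S' m := by
  intro g hg
  simp only [selGrp, Finset.mem_filter, Finset.mem_univ, true_and] at hg ⊢
  obtain ⟨j, hj1, hj2⟩ := hg
  exact ⟨j, hj1, hS hj2⟩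

lemma FDPhat_thresh_le (A : (m : Fin M) → Fin (G m) → Finset (Fin N))
    (h : (m : Fin M) → Fin N → Fin (G m))
    (e : (m : Fin M) → Fin (G m) → ℝ≥0∞) (α : Fin M → ℝ)
    (hα : ∀ m', 0 < α m') (m : Fin M) :
    FDPhat A h e (filterThreshold A h e α) m ≤ ENNReal.ofReal (α m) := by
  classical
  set th := filterThreshold A h e α with hth
  set D : ℝ≥0∞ := ((max (selGrp A (sel h e th) m).card 1 : ℕ) : ℝ≥0∞) with hD
  have hD1 : (1 : ℝ≥0∞) ≤ D := by
    rw [hD]; exact_mod_cast Nat.one_le_cast.mpr (le_max_right _ _)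
  have hD0 : D ≠ 0 := (lt_of_lt_of_le zero_lt_one hD1).ne'
  have hDtop : D ≠ ⊤ := ENNReal.natCast_ne_top _
  have hα0 : ENNReal.ofReal (α m) ≠ 0 := by
    simpa [ENNReal.ofReal_eq_zero, not_le] using (hα m)
  set C : ℝ≥0∞ := ENNReal.ofReal (α m) * D with hC
  have hC0 : C ≠ 0 := mul_ne_zero hα0 hD0
  have hCtop : C ≠ ⊤ := ENNReal.mul_ne_top ENNReal.ofReal_ne_top hDtop
  have hkey : (G m : ℝ≥0∞) / C ≤ th m := by
    refine le_sInf ?_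
    rintro s ⟨t, htadm, rfl⟩
    have htm1 : (1 : ℝ≥0∞) ≤ t m := htadm.1 m
    have htm0 : t m ≠ 0 := (lt_of_lt_of_le zero_lt_one htm1).ne'
    have hsub : sel h e t ⊆ sel h e th :=
      sel_anti h e (fun m' => sInf_le ⟨t, htadm, rfl⟩)
    have hDt : ((max (selGrp A (sel h e t) m).card 1 : ℕ) : ℝ≥0∞) ≤ D := by
      rw [hD]
      exact_mod_cast Nat.cast_le.mpr
        (max_le_max (Finset.card_le_card (selGrp_mono A hsub m)) le_rfl)
    have hDt1 : (1 : ℝ≥0∞) ≤ ((max (selGrp A (sel h e t) m).card 1 : ℕ) : ℝ≥0∞) := by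
      exact_mod_cast Nat.one_le_cast.mpr (le_max_right _ _)
    have hDt0 : ((max (selGrp A (sel h e t) m).card 1 : ℕ) : ℝ≥0∞) ≠ 0 :=
      (lt_of_lt_of_le zero_lt_one hDt1).ne'
    have h1 : (G m : ℝ≥0∞) / t m ≤ C := by
      have h1' := htadm.2 m
      rw [FDPhat, ENNReal.div_le_iff_le_mul (Or.inl hDt0)
        (Or.inr hα0)] at h1'
      calc (G m : ℝ≥0∞) / t m ≤ ENNReal.ofReal (α m) *
            ((max (selGrp A (sel h e t) m).card 1 : ℕ) : ℝ≥0∞) := h1'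
        _ ≤ C := by rw [hC]; exact mul_le_mul_right hDt _
    have h2 : (G m : ℝ≥0∞) ≤ C * t m :=
      (ENNReal.div_le_iff_le_mul (Or.inl htm0) (Or.inr hC0)).mp h1
    rw [ENNReal.div_le_iff_le_mul (Or.inl hC0) (Or.inr htm0), mul_comm]
    exact h2
  -- conclude
  have hGdc : (G m : ℝ≥0∞) / th m ≤ C := by
    by_cases hG0 : (G m : ℝ≥0∞) = 0
    · simp [hG0]
    · have hGC0 : (G m : ℝ≥0∞) / C ≠ 0 := by
        simp only [ne_eq, ENNReal.div_eq_zero_iff, not_or]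
        exact ⟨hG0, hCtop⟩
      calc (G m : ℝ≥0∞) / th m ≤ (G m : ℝ≥0∞) / ((G m : ℝ≥0∞) / C) :=
            ENNReal.div_le_div_left hkey _
        _ ≤ C := by
            rw [ENNReal.div_le_iff_le_mul (Or.inl hGC0) (Or.inr hC0),
              ENNReal.mul_div_cancel hC0 hCtop]
  calc FDPhat A h e th m = ((G m : ℝ≥0∞) / th m) / D := rfl
    _ ≤ C / D := ENNReal.div_le_div_right hGdc _
    _ = ENNReal.ofReal (α m) * (D / D) := by rw [hC, mul_div_assoc]
    _ = ENNReal.ofReal (α m) := by rw [ENNReal.div_self hD0 hDtop, mul_one]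

lemma FDP_output_le (A : (m : Fin M) → Fin (G m) → Finset (Fin N))
    (h : (m : Fin M) → Fin N → Fin (G m))
    (hdisj : ∀ m, ∀ g₁ g₂ : Fin (G m), g₁ ≠ g₂ → Disjoint (A m g₁) (A m g₂))
    (hmem : ∀ m j, j ∈ A m (h m j))
    (H0 : Finset (Fin N))
    (e : (m : Fin M) → Fin (G m) → ℝ≥0∞) (α : Fin M → ℝ)
    (hα : ∀ m', 0 < α m') (he : ∀ m' g, e m' g ≠ ⊤) (m : Fin M)
    (hGm : 0 < G m) :
    FDP A H0 (output A h e α) m ≤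
      ENNReal.ofReal (α m) / (G m : ℝ≥0∞) * ∑ g ∈ nullGrp A H0 m, e m g := by
  classical
  set th := filterThreshold A h e α with hth
  by_cases htop : th m = ⊤
  · have hout : output A h e α = ∅ := by
      ext j
      simp only [output, sel, Finset.mem_filter, Finset.mem_univ, true_and,
        Finset.notMem_empty, iff_false]
      intro hall
      have := hall m
      rw [← hth, htop, top_le_iff] at this
      exact he m (h m j) this
    rw [hout]
    have : selGrp A (∅ : Finset (Fin N)) m = ∅ := by
      ext g; simp [selGrp]
    simp [FDP, this]
  · have hth1 : (1 : ℝ≥0∞) ≤ th m := by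
      refine le_sInf ?_
      rintro s ⟨t, htadm, rfl⟩
      exact htadm.1 m
    have hth0 : th m ≠ 0 := (lt_of_lt_of_le zero_lt_one hth1).ne'
    set S := output A h e α with hS
    set D : ℝ≥0∞ := ((max (selGrp A S m).card 1 : ℕ) : ℝ≥0∞) with hD
    have hD1 : (1 : ℝ≥0∞) ≤ D := by
      rw [hD]; exact_mod_cast Nat.one_le_cast.mpr (le_max_right _ _)
    have hD0 : D ≠ 0 := (lt_of_lt_of_le zero_lt_one hD1).ne'
    have hDtop : D ≠ ⊤ := ENNReal.natCast_ne_top _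
    have hα0 : ENNReal.ofReal (α m) ≠ 0 := by
      simpa [ENNReal.ofReal_eq_zero, not_le] using (hα m)
    have hG0 : (G m : ℝ≥0∞) ≠ 0 := by exact_mod_cast hGm.ne'
    have hGtop : (G m : ℝ≥0∞) ≠ ⊤ := ENNReal.natCast_ne_top _
    -- each selected group has a large e-value
    have hSel : ∀ g ∈ selGrp A S m, th m ≤ e m g := by
      intro g hg
      simp only [selGrp, Finset.mem_filter, Finset.mem_univ, true_and] at hg
      obtain ⟨j, hjA, hjS⟩ := hg
      have hj : th m ≤ e m (h m j) := by
        simp only [hS, output, sel, Finset.mem_filter, Finset.mem_univ,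
          true_and] at hjS
        exact hjS m
      have hhj : h m j = g := by
        by_contra hne'
        exact (Finset.disjoint_left.mp (hdisj m _ _ hne')) (hmem m j) hjA
      rwa [hhj] at hj
    set E : ℝ≥0∞ := ∑ g ∈ nullGrp A H0 m, e m g with hE
    have hcard : ((selGrp A S m ∩ nullGrp A H0 m).card : ℝ≥0∞) ≤ E / th m := by
      calc ((selGrp A S m ∩ nullGrp A H0 m).card : ℝ≥0∞)
          = ∑ _g ∈ selGrp A S m ∩ nullGrp A H0 m, (1 : ℝ≥0∞) := by
            rw [Finset.sum_const, nsmul_eq_mul, mul_one]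
        _ ≤ ∑ g ∈ selGrp A S m ∩ nullGrp A H0 m, e m g / th m := by
            refine Finset.sum_le_sum ?_
            intro g hg
            have : th m ≤ e m g := hSel g (Finset.mem_of_mem_inter_left hg)
            rw [ENNReal.le_div_iff_mul_le (Or.inl hth0) (Or.inl htop), one_mul]
            exact this
        _ ≤ ∑ g ∈ nullGrp A H0 m, e m g / th m := by
            refine Finset.sum_le_sum_of_subset ?_
            exact Finset.inter_subset_right
        _ = E / th m := by
            simp only [div_eq_mul_inv]
            rw [hE, Finset.sum_mul]
    -- from the FDPhat bound at the threshold
    have hhat := FDPhat_thresh_le A h e α hα m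
    rw [FDPhat] at hhat
    have hDeq : ((max (selGrp A (sel h e th) m).card 1 : ℕ) : ℝ≥0∞) = D := rfl
    rw [hDeq] at hhat
    have hGle : (G m : ℝ≥0∞) ≤ ENNReal.ofReal (α m) * D * th m := by
      have h1 : (G m : ℝ≥0∞) / th m ≤ ENNReal.ofReal (α m) * D :=
        (ENNReal.div_le_iff_le_mul (Or.inl hD0) (Or.inr hα0)).mp hhat
      exact (ENNReal.div_le_iff_le_mul (Or.inl hth0)
        (Or.inr (mul_ne_zero hα0 hD0))).mp h1
    have hthD : (G m : ℝ≥0∞) / ENNReal.ofReal (α m) ≤ th m * D := by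
      rw [ENNReal.div_le_iff_le_mul (Or.inl hα0) (Or.inr (mul_ne_zero hth0 hD0))]
      calc (G m : ℝ≥0∞) ≤ ENNReal.ofReal (α m) * D * th m := hGle
        _ = th m * D * ENNReal.ofReal (α m) := by ring
    have hone : ENNReal.ofReal (α m) / (G m : ℝ≥0∞) *
        ((G m : ℝ≥0∞) / ENNReal.ofReal (α m)) = 1 := by
      rw [div_eq_mul_inv, div_eq_mul_inv]
      have : ENNReal.ofReal (α m) * (G m : ℝ≥0∞)⁻¹ *
          ((G m : ℝ≥0∞) * (ENNReal.ofReal (α m))⁻¹) =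
          ENNReal.ofReal (α m) * (ENNReal.ofReal (α m))⁻¹ *
            ((G m : ℝ≥0∞)⁻¹ * (G m : ℝ≥0∞)) := by ring
      rw [this, ENNReal.mul_inv_cancel hα0 ENNReal.ofReal_ne_top,
        ENNReal.inv_mul_cancel hG0 hGtop, one_mul]
    have hfinal : E / (th m * D) ≤ ENNReal.ofReal (α m) / (G m : ℝ≥0∞) * E := by
      rw [ENNReal.div_le_iff_le_mul (Or.inl (mul_ne_zero hth0 hD0))
        (Or.inl (ENNReal.mul_ne_top htop hDtop))]
      calc E = E * (ENNReal.ofReal (α m) / (G m : ℝ≥0∞) *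
            ((G m : ℝ≥0∞) / ENNReal.ofReal (α m))) := by rw [hone, mul_one]
        _ ≤ E * (ENNReal.ofReal (α m) / (G m : ℝ≥0∞) * (th m * D)) :=
            mul_le_mul_right (mul_le_mul_right hthD _) _
        _ = ENNReal.ofReal (α m) / (G m : ℝ≥0∞) * E * (th m * D) := by ring
    calc FDP A H0 S m = ((selGrp A S m ∩ nullGrp A H0 m).card : ℝ≥0∞) / D := rfl
      _ ≤ (E / th m) / D := ENNReal.div_le_div_right hcard _
      _ = E / (th m * D) := by
          rw [div_eq_mul_inv, div_eq_mul_inv, div_eq_mul_inv, mul_assoc,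
            ENNReal.mul_inv (Or.inl hth0) (Or.inl htop)]
      _ ≤ ENNReal.ofReal (α m) / (G m : ℝ≥0∞) * E := hfinal



/-!
STATEMENT 19 (Theorem 5 of the supplementary material, derandomized multilayer
knockoff filter case).

For each layer `m` and replication `r`, knockoff-type statistics `T_{g,r}^(m)` and a
random threshold `t̃_r^(m) > 0` satisfy the knockoff supremum bound
`E[sup_{t>0} #{g∈H0^(m) : T_{g,r}^(m) ≥ t}/(1 + #{g∈H0^(m) : T_{g,r}^(m) ≤ −t})] ≤ c_kn`.
With `V̂_r^(m) = c·(1 + #{g : T_{g,r}^(m) ≤ −t̃_r^(m)})`, generalized e-values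
`e_{g,r}^(m) = G^(m)·1{T_{g,r}^(m) ≥ t̃_r^(m)}/max(V̂_r^(m), γ^(m))`, and fixed
weights `w_r^(m)` summing to one, the generalized e-filter applied to the averaged
e-values at target levels `α^(1),…,α^(M)` satisfies
`FDR^(m) ≤ (c_kn/c)·α^(m)` for every `m`.
-/

theorem stmt19 {N M : ℕ} (hN : 1 ≤ N) (hM : 1 ≤ M) {G : Fin M → ℕ}
    (A : (m : Fin M) → Fin (G m) → Finset (Fin N))
    (h : (m : Fin M) → Fin N → Fin (G m))
    (hne : ∀ m g, (A m g).Nonempty)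
    (hdisj : ∀ m, ∀ g₁ g₂ : Fin (G m), g₁ ≠ g₂ → Disjoint (A m g₁) (A m g₂))
    (hmem : ∀ m j, j ∈ A m (h m j))
    (H0 : Finset (Fin N))
    {Ω : Type*} [MeasurableSpace Ω] (P : Measure Ω) [IsProbabilityMeasure P]
    (c : ℝ) (hc : 0 < c) (ckn : ℝ) (hckn : 0 < ckn)
    (γ α : Fin M → ℝ)
    (hγ : ∀ m, γ m ∈ Set.Ioo (0 : ℝ) 1) (hα : ∀ m, α m ∈ Set.Ioo (0 : ℝ) 1)
    (R : ℕ) (hR : 1 ≤ R)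
    (T : Ω → (m : Fin M) → Fin R → Fin (G m) → ℝ)
    (hmeasT : ∀ m (r : Fin R) g, Measurable fun ω => T ω m r g)
    (ttil : Ω → Fin M → Fin R → ℝ) (httil : ∀ ω m r, 0 < ttil ω m r)
    (hmeasttil : ∀ m r, Measurable fun ω => ttil ω m r)
    -- the knockoff supremum bound
    (hkn : ∀ m (r : Fin R), ∫⁻ ω, ENNReal.ofReal
        (⨆ t : Set.Ioi (0 : ℝ),
          (((nullGrp A H0 m).filter fun g => (t : ℝ) ≤ T ω m r g).card : ℝ) /
            (1 + (((nullGrp A H0 m).filter fun g => T ω m r g ≤ -(t : ℝ)).card : ℝ))) ∂P ≤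
      ENNReal.ofReal ckn)
    (w : Fin M → Fin R → ℝ) (hw : ∀ m r, 0 ≤ w m r) (hw1 : ∀ m, ∑ r, w m r = 1) :
    ∀ m, (∫⁻ ω, FDP A H0
        (output A h (fun m' g => ENNReal.ofReal (∑ r, w m' r *
          ((G m' : ℝ) * (if ttil ω m' r ≤ T ω m' r g then 1 else 0) /
            max (c * (1 + ((Finset.univ.filter fun g' : Fin (G m') =>
              T ω m' r g' ≤ -(ttil ω m' r)).card : ℝ))) (γ m')))) α)
        m ∂P) ≤ ENNReal.ofReal (ckn / c * α m) := by
  intro m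
  classical
  have hGm : 0 < G m := (h m ⟨0, hN⟩).pos
  have hαm : 0 < α m := (hα m).1
  have hG0 : (G m : ℝ≥0∞) ≠ 0 := by exact_mod_cast hGm.ne'
  have hGtop : (G m : ℝ≥0∞) ≠ ⊤ := ENNReal.natCast_ne_top _
  -- constants and majorant functions
  set cst : Fin R → ℝ≥0∞ := fun r => ENNReal.ofReal (w m r * (α m / c)) with hcst
  set gb : Fin R → Ω → ℝ≥0∞ := fun r ω => ⨆ q : {q : ℚ // 0 < q},
      ENNReal.ofReal ((((nullGrp A H0 m).filter fun g => (q : ℝ) ≤ T ω m r g).card : ℝ) /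
        (1 + (((nullGrp A H0 m).filter fun g => T ω m r g ≤ -(q : ℝ)).card : ℝ))) with hgb
  -- measurability of the majorants
  have hmeas_gb : ∀ r, Measurable (gb r) := by
    intro r
    refine Measurable.iSup fun q => Measurable.ennreal_ofReal (Measurable.div ?_ ?_)
    · have heq : (fun ω => (((nullGrp A H0 m).filter fun g =>
          (q : ℝ) ≤ T ω m r g).card : ℝ)) = fun ω => ∑ g ∈ nullGrp A H0 m,
            if (q : ℝ) ≤ T ω m r g then (1 : ℝ) else 0 := by
        funext ω; rw [Finset.sum_boole]
      rw [heq]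
      exact Finset.measurable_sum _ fun g _ => Measurable.ite
        (measurableSet_le measurable_const (hmeasT m r g))
        measurable_const measurable_const
    · have heq : (fun ω => 1 + (((nullGrp A H0 m).filter fun g =>
          T ω m r g ≤ -(q : ℝ)).card : ℝ)) = fun ω => 1 + ∑ g ∈ nullGrp A H0 m,
            if T ω m r g ≤ -(q : ℝ) then (1 : ℝ) else 0 := by
        funext ω; rw [Finset.sum_boole]
      rw [heq]
      exact measurable_const.add (Finset.measurable_sum _ fun g _ => Measurable.ite
        (measurableSet_le (hmeasT m r g) measurable_const)
        measurable_const measurable_const)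
  -- lintegral bound for the majorants
  have hint_gb : ∀ r, ∫⁻ ω, gb r ω ∂P ≤ ENNReal.ofReal ckn := by
    intro r
    refine le_trans (lintegral_mono fun ω => ?_) (hkn m r)
    refine iSup_le fun q => ENNReal.ofReal_le_ofReal ?_
    have hbdd : BddAbove (Set.range fun t : Set.Ioi (0 : ℝ) =>
        (((nullGrp A H0 m).filter fun g => (t : ℝ) ≤ T ω m r g).card : ℝ) /
          (1 + (((nullGrp A H0 m).filter fun g => T ω m r g ≤ -(t : ℝ)).card : ℝ))) := by
      refine ⟨((nullGrp A H0 m).card : ℝ), ?_⟩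
      rintro x ⟨t, rfl⟩
      refine le_trans (div_le_self (by positivity) ?_) ?_
      · have : (0:ℝ) ≤ (((nullGrp A H0 m).filter fun g => T ω m r g ≤ -(t : ℝ)).card : ℝ) := by
          positivity
        linarith
      · exact_mod_cast Finset.card_filter_le _ _
    exact le_ciSup hbdd (⟨(q : ℝ), Set.mem_Ioi.mpr (by exact_mod_cast q.2)⟩ : Set.Ioi (0:ℝ))
  -- pointwise bound on the FDP
  have hpt : ∀ ω, FDP A H0
      (output A h (fun m' g => ENNReal.ofReal (∑ r, w m' r *
        ((G m' : ℝ) * (if ttil ω m' r ≤ T ω m' r g then 1 else 0) /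
          max (c * (1 + ((Finset.univ.filter fun g' : Fin (G m') =>
            T ω m' r g' ≤ -(ttil ω m' r)).card : ℝ))) (γ m')))) α)
      m ≤ ∑ r, cst r * gb r ω := by
    intro ω
    set e : (m' : Fin M) → Fin (G m') → ℝ≥0∞ := fun m' g => ENNReal.ofReal (∑ r, w m' r *
        ((G m' : ℝ) * (if ttil ω m' r ≤ T ω m' r g then 1 else 0) /
          max (c * (1 + ((Finset.univ.filter fun g' : Fin (G m') =>
            T ω m' r g' ≤ -(ttil ω m' r)).card : ℝ))) (γ m'))) with he
    have h1 := FDP_output_le A h hdisj hmem H0 e α (fun m' => (hα m').1)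
      (fun m' g => ENNReal.ofReal_ne_top) m hGm
    refine h1.trans ?_
    -- denominators
    set dr : Fin R → ℝ := fun r => max (c * (1 + ((Finset.univ.filter fun g' : Fin (G m) =>
        T ω m r g' ≤ -(ttil ω m r)).card : ℝ))) (γ m) with hdr
    have hdrpos : ∀ r, 0 < dr r := by
      intro r
      refine lt_of_lt_of_le ?_ (le_max_left _ _)
      have : (0:ℝ) ≤ ((Finset.univ.filter fun g' : Fin (G m) =>
          T ω m r g' ≤ -(ttil ω m r)).card : ℝ) := by positivity
      nlinarith
    have hterm_nonneg : ∀ (r : Fin R) (g : Fin (G m)), 0 ≤ w m r *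
        ((G m : ℝ) * (if ttil ω m r ≤ T ω m r g then 1 else 0) / dr r) := by
      intro r g
      refine mul_nonneg (hw m r) (div_nonneg (mul_nonneg (by positivity) ?_) (hdrpos r).le)
      split <;> norm_num
    have hsum : (∑ g ∈ nullGrp A H0 m, e m g) =
        ∑ r : Fin R, ENNReal.ofReal ((w m r * (G m : ℝ) / dr r) *
          (((nullGrp A H0 m).filter fun g => ttil ω m r ≤ T ω m r g).card : ℝ)) := by
      have e_eq : ∀ g, e m g = ∑ r : Fin R, ENNReal.ofReal (w m r *
          ((G m : ℝ) * (if ttil ω m r ≤ T ω m r g then 1 else 0) / dr r)) := by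
        intro g
        rw [he]
        exact ENNReal.ofReal_sum_of_nonneg fun r _ => hterm_nonneg r g
      rw [Finset.sum_congr rfl fun g _ => e_eq g, Finset.sum_comm]
      refine Finset.sum_congr rfl fun r _ => ?_
      rw [← ENNReal.ofReal_sum_of_nonneg fun g _ => hterm_nonneg r g]
      congr 1
      have : ∀ g : Fin (G m), w m r * ((G m : ℝ) *
          (if ttil ω m r ≤ T ω m r g then 1 else 0) / dr r) =
          (w m r * (G m : ℝ) / dr r) * (if ttil ω m r ≤ T ω m r g then (1:ℝ) else 0) := by
        intro g; ring
      rw [Finset.sum_congr rfl fun g _ => this g, ← Finset.mul_sum, Finset.sum_boole]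
    rw [hsum, Finset.mul_sum]
    refine Finset.sum_le_sum fun r _ => ?_
    obtain ⟨q, hq0, hnumq, hdenq⟩ :=
      exists_rat_thresh (nullGrp A H0 m) (T ω m r) (httil ω m r)
    -- real-valued comparison
    set nq : ℝ := (((nullGrp A H0 m).filter fun g => (q : ℝ) ≤ T ω m r g).card : ℝ) with hnq
    set dq : ℝ := (((nullGrp A H0 m).filter fun g => T ω m r g ≤ -(q : ℝ)).card : ℝ) with hdq
    have hreal : (w m r * (G m : ℝ) / dr r) *
        (((nullGrp A H0 m).filter fun g => ttil ω m r ≤ T ω m r g).card : ℝ) ≤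
        (w m r * (G m : ℝ) / c) * (nq / (1 + dq)) := by
      have hd1 : (0:ℝ) < 1 + dq := by rw [hdq]; positivity
      have hled : c * (1 + dq) ≤ dr r := by
        refine le_trans ?_ (le_max_left _ _)
        refine mul_le_mul_of_nonneg_left ?_ hc.le
        have h1 : dq ≤ (((nullGrp A H0 m).filter fun g =>
            T ω m r g ≤ -(ttil ω m r)).card : ℝ) := by
          rw [hdq]; exact_mod_cast hdenq
        have h2 : (((nullGrp A H0 m).filter fun g =>
            T ω m r g ≤ -(ttil ω m r)).card : ℝ) ≤
            ((Finset.univ.filter fun g' : Fin (G m) =>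
              T ω m r g' ≤ -(ttil ω m r)).card : ℝ) := by
          exact_mod_cast Finset.card_le_card
            (Finset.filter_subset_filter _ (Finset.subset_univ _))
        linarith
      have hdiv : (((nullGrp A H0 m).filter fun g =>
          ttil ω m r ≤ T ω m r g).card : ℝ) / dr r ≤ (nq / (1 + dq)) / c := by
        rw [div_div, mul_comm]
        refine div_le_div₀ (by rw [hnq]; positivity) ?_ (by positivity) hled
        rw [hnq]; exact_mod_cast hnumq
      calc (w m r * (G m : ℝ) / dr r) *
          (((nullGrp A H0 m).filter fun g => ttil ω m r ≤ T ω m r g).card : ℝ)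
          = (w m r * (G m : ℝ)) *
            ((((nullGrp A H0 m).filter fun g => ttil ω m r ≤ T ω m r g).card : ℝ) / dr r) := by
            ring
        _ ≤ (w m r * (G m : ℝ)) * ((nq / (1 + dq)) / c) := by
            refine mul_le_mul_of_nonneg_left hdiv ?_
            exact mul_nonneg (hw m r) (by positivity)
        _ = (w m r * (G m : ℝ) / c) * (nq / (1 + dq)) := by ring
    have hle_gb : ENNReal.ofReal (nq / (1 + dq)) ≤ gb r ω := by
      rw [hgb]
      exact le_iSup (fun p : {q : ℚ // 0 < q} => ENNReal.ofReal
        ((((nullGrp A H0 m).filter fun g => (p : ℝ) ≤ T ω m r g).card : ℝ) /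
          (1 + (((nullGrp A H0 m).filter fun g => T ω m r g ≤ -(p : ℝ)).card : ℝ))))
        (⟨q, hq0⟩ : {q : ℚ // 0 < q})
    have hconst : ENNReal.ofReal (α m) / (G m : ℝ≥0∞) *
        ENNReal.ofReal (w m r * (G m : ℝ) / c) = cst r := by
      rw [hcst]
      have h1 : ENNReal.ofReal (α m) / (G m : ℝ≥0∞) *
          ENNReal.ofReal (w m r * (G m : ℝ) / c) =
          ENNReal.ofReal (α m * (w m r * (G m : ℝ) / c)) / (G m : ℝ≥0∞) := by
        rw [div_eq_mul_inv, mul_right_comm, ← div_eq_mul_inv, ← ENNReal.ofReal_mul hαm.le]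
      rw [h1, show α m * (w m r * (G m : ℝ) / c) = (w m r * (α m / c)) * (G m : ℝ) from by
        ring, ENNReal.ofReal_mul (mul_nonneg (hw m r) (by positivity)),
        ENNReal.ofReal_natCast, mul_div_assoc, ENNReal.div_self hG0 hGtop, mul_one]
    calc ENNReal.ofReal (α m) / (G m : ℝ≥0∞) * ENNReal.ofReal ((w m r * (G m : ℝ) / dr r) *
          (((nullGrp A H0 m).filter fun g => ttil ω m r ≤ T ω m r g).card : ℝ))
        ≤ ENNReal.ofReal (α m) / (G m : ℝ≥0∞) *
          ENNReal.ofReal ((w m r * (G m : ℝ) / c) * (nq / (1 + dq))) :=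
          mul_le_mul_right (ENNReal.ofReal_le_ofReal hreal) _
      _ = ENNReal.ofReal (α m) / (G m : ℝ≥0∞) * (ENNReal.ofReal (w m r * (G m : ℝ) / c) *
            ENNReal.ofReal (nq / (1 + dq))) := by
          rw [ENNReal.ofReal_mul (div_nonneg (mul_nonneg (hw m r) (Nat.cast_nonneg _)) hc.le)]
      _ ≤ ENNReal.ofReal (α m) / (G m : ℝ≥0∞) *
            (ENNReal.ofReal (w m r * (G m : ℝ) / c) * gb r ω) :=
          mul_le_mul_right (mul_le_mul_right hle_gb _) _
      _ = (ENNReal.ofReal (α m) / (G m : ℝ≥0∞) *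
            ENNReal.ofReal (w m r * (G m : ℝ) / c)) * gb r ω := (mul_assoc _ _ _).symm
      _ = cst r * gb r ω := by rw [hconst]
  -- integrate
  calc (∫⁻ ω, FDP A H0
        (output A h (fun m' g => ENNReal.ofReal (∑ r, w m' r *
          ((G m' : ℝ) * (if ttil ω m' r ≤ T ω m' r g then 1 else 0) /
            max (c * (1 + ((Finset.univ.filter fun g' : Fin (G m') =>
              T ω m' r g' ≤ -(ttil ω m' r)).card : ℝ))) (γ m')))) α)
        m ∂P)
      ≤ ∫⁻ ω, ∑ r, cst r * gb r ω ∂P := lintegral_mono hpt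
    _ = ∑ r, ∫⁻ ω, cst r * gb r ω ∂P :=
        lintegral_finset_sum _ fun r _ => (hmeas_gb r).const_mul _
    _ = ∑ r, cst r * ∫⁻ ω, gb r ω ∂P := by
        refine Finset.sum_congr rfl fun r _ => ?_
        rw [lintegral_const_mul _ (hmeas_gb r)]
    _ ≤ ∑ r, cst r * ENNReal.ofReal ckn :=
        Finset.sum_le_sum fun r _ => mul_le_mul_right (hint_gb r) _
    _ = ENNReal.ofReal (ckn / c * α m) := by
        have : ∀ r : Fin R, cst r * ENNReal.ofReal ckn =
            ENNReal.ofReal (w m r * (α m / c * ckn)) := by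
          intro r
          rw [hcst, ← ENNReal.ofReal_mul (mul_nonneg (hw m r) (by positivity))]
          ring_nf
        rw [Finset.sum_congr rfl fun r _ => this r,
          ← ENNReal.ofReal_sum_of_nonneg fun r _ =>
            mul_nonneg (hw m r) (by positivity), ← Finset.sum_mul, hw1 m, one_mul]
        congr 1
        ring

end MultilayerEFilter
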